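/- For every natural number n ≥ 2 and every natural number m, there is no injective group homomorphism from Aut(ℂⁿ) to GL_m(ℂ); that is, the group Aut(ℂⁿ) of polynomial automorphisms of ℂⁿ is not linear. -/
import Mathlib


open scoped MatrixGroups

noncomputable section

/-- The group `Aut(ℂⁿ)` of polynomial automorphisms of `ℂⁿ`, identified with the group of
`ℂ`-algebra automorphisms of the polynomial ring `ℂ[x₁,…,xₙ]`. -/
abbrev PolyAutN (n : ℕ) : Type :=
  MvPolynomial (Fin n) ℂ ≃ₐ[ℂ] MvPolynomial (Fin n) ℂ

namespace AutCnAux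
open MvPolynomial
variable {n : ℕ}

lemma zo (hn : 2 ≤ n) : (⟨0, by omega⟩ : Fin n) ≠ (⟨1, by omega⟩ : Fin n) := by
  simp [Fin.ext_iff]

lemma hom_C (f : MvPolynomial (Fin n) ℂ →ₐ[ℂ] MvPolynomial (Fin n) ℂ) (r : ℂ) :
    f (C r) = C r := by
  rw [← MvPolynomial.algebraMap_eq]; exact f.commutes r

/-- elementary shear `x₁ ↦ x₁ + c x₀^N` -/
def Ehom (hn : 2 ≤ n) (c : ℂ) (N : ℕ) : MvPolynomial (Fin n) ℂ →ₐ[ℂ] MvPolynomial (Fin n) ℂ :=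
  aeval (fun i => if i = (⟨1, by omega⟩ : Fin n) then X i + C c * X (⟨0, by omega⟩ : Fin n) ^ N else X i)

lemma Ehom_X1 (hn : 2 ≤ n) (c : ℂ) (N : ℕ) :
    Ehom hn c N (X (⟨1, by omega⟩ : Fin n)) =
      X (⟨1, by omega⟩ : Fin n) + C c * X (⟨0, by omega⟩ : Fin n) ^ N := by
  simp [Ehom]

lemma Ehom_X_ne (hn : 2 ≤ n) (c : ℂ) (N : ℕ) (i : Fin n) (h : i ≠ (⟨1, by omega⟩ : Fin n)) :
    Ehom hn c N (X i) = X i := by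
  simp [Ehom, h]

/-- scaling `x₀ ↦ u x₀` -/
def Shom (hn : 2 ≤ n) (u : ℂ) : MvPolynomial (Fin n) ℂ →ₐ[ℂ] MvPolynomial (Fin n) ℂ :=
  aeval (fun i => if i = (⟨0, by omega⟩ : Fin n) then C u * X i else X i)

lemma Shom_X0 (hn : 2 ≤ n) (u : ℂ) :
    Shom hn u (X (⟨0, by omega⟩ : Fin n)) = C u * X (⟨0, by omega⟩ : Fin n) := by
  simp [Shom]

lemma Shom_X_ne (hn : 2 ≤ n) (u : ℂ) (i : Fin n) (h : i ≠ (⟨0, by omega⟩ : Fin n)) :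
    Shom hn u (X i) = X i := by
  simp [Shom, h]

lemma Ehom_comp (hn : 2 ≤ n) (c d : ℂ) (N : ℕ) :
    (Ehom hn c N).comp (Ehom hn d N) = Ehom hn (c + d) N := by
  apply algHom_ext
  intro i
  by_cases h : i = (⟨1, by omega⟩ : Fin n)
  · subst h
    simp only [AlgHom.comp_apply, Ehom_X1, map_add, map_mul, map_pow,
      Ehom_X_ne hn c N _ (zo hn), Ehom_X1, AlgHomClass.commutes, map_add]
    rw [hom_C]; ring
  · simp only [AlgHom.comp_apply, Ehom_X_ne hn _ _ _ h]

lemma Ehom_zero (hn : 2 ≤ n) (N : ℕ) : Ehom hn 0 N = AlgHom.id ℂ _ := by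
  apply algHom_ext
  intro i
  by_cases h : i = (⟨1, by omega⟩ : Fin n) <;> simp [Ehom, h]

def Eaut (hn : 2 ≤ n) (c : ℂ) (N : ℕ) : PolyAutN n :=
  AlgEquiv.ofAlgHom (Ehom hn c N) (Ehom hn (-c) N)
    (by rw [Ehom_comp]; simpa using Ehom_zero hn N)
    (by rw [Ehom_comp]; simpa using Ehom_zero hn N)

lemma Shom_comp (hn : 2 ≤ n) (u v : ℂ) :
    (Shom hn u).comp (Shom hn v) = Shom hn (u * v) := by
  apply algHom_ext
  intro i
  by_cases h : i = (⟨0, by omega⟩ : Fin n)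
  · subst h
    simp only [AlgHom.comp_apply, Shom_X0, map_mul, AlgHomClass.commutes]
    rw [hom_C]; ring
  · simp only [AlgHom.comp_apply, Shom_X_ne hn _ _ h]

lemma Shom_one (hn : 2 ≤ n) : Shom hn 1 = AlgHom.id ℂ _ := by
  apply algHom_ext
  intro i
  by_cases h : i = (⟨0, by omega⟩ : Fin n) <;> simp [Shom, h]

def Saut (hn : 2 ≤ n) (u : ℂˣ) : PolyAutN n :=
  AlgEquiv.ofAlgHom (Shom hn (u : ℂ)) (Shom hn ((u⁻¹ : ℂˣ) : ℂ))
    (by rw [Shom_comp]; simpa using Shom_one hn)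
    (by rw [Shom_comp]; simpa using Shom_one hn)

lemma aut_mul_eq_of_algHom (σ τ : PolyAutN n)
    (h : (σ.toAlgHom).comp τ.toAlgHom = (τ.toAlgHom).comp σ.toAlgHom) :
    σ * τ = τ * σ := by
  apply AlgEquiv.ext
  intro p
  have := DFunLike.congr_fun h p
  simpa [AlgEquiv.mul_apply] using this

lemma Saut_apply (hn : 2 ≤ n) (u : ℂˣ) (p : MvPolynomial (Fin n) ℂ) :
    Saut hn u p = Shom hn (u : ℂ) p := rfl

lemma Eaut_apply (hn : 2 ≤ n) (c : ℂ) (N : ℕ) (p : MvPolynomial (Fin n) ℂ) :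
    Eaut hn c N p = Ehom hn c N p := rfl

lemma SE_key (hn : 2 ≤ n) (u : ℂˣ) (c : ℂ) (N : ℕ) :
    Saut hn u (Eaut hn c N (X (⟨1, by omega⟩ : Fin n)))
      = X (⟨1, by omega⟩ : Fin n) + C (c * (u : ℂ) ^ N) * X (⟨0, by omega⟩ : Fin n) ^ N := by
  rw [Eaut_apply, Saut_apply, Ehom_X1, map_add, map_mul, map_pow,
    Shom_X_ne hn _ _ (Ne.symm (zo hn)), Shom_X0,
    hom_C _ c, mul_pow, ← C_pow, C_mul]
  ring

lemma ES_key (hn : 2 ≤ n) (u : ℂˣ) (c : ℂ) (N : ℕ) :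
    Eaut hn c N (Saut hn u (X (⟨1, by omega⟩ : Fin n)))
      = X (⟨1, by omega⟩ : Fin n) + C c * X (⟨0, by omega⟩ : Fin n) ^ N := by
  rw [Saut_apply, Eaut_apply, Shom_X_ne hn _ _ (Ne.symm (zo hn)), Ehom_X1]

/-- commuting case -/
lemma SE_comm (hn : 2 ≤ n) (u : ℂˣ) (c : ℂ) (N : ℕ) (hu : (u : ℂ) ^ N = 1) :
    Saut hn u * Eaut hn c N = Eaut hn c N * Saut hn u := by
  apply aut_mul_eq_of_algHom
  apply algHom_ext
  intro i
  show Saut hn u (Eaut hn c N (X i)) = Eaut hn c N (Saut hn u (X i))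
  by_cases h1 : i = (⟨1, by omega⟩ : Fin n)
  · subst h1
    rw [SE_key, ES_key, hu, mul_one]
  · by_cases h0 : i = (⟨0, by omega⟩ : Fin n)
    · subst h0
      rw [Eaut_apply, Saut_apply, Ehom_X_ne hn _ _ _ (zo hn), Saut_apply, Shom_X0,
        Eaut_apply, map_mul, Ehom_X_ne hn _ _ _ (zo hn),
        hom_C _ _]
    · rw [Eaut_apply, Saut_apply, Ehom_X_ne hn _ _ _ h1, Shom_X_ne hn _ _ h0,
        Saut_apply, Shom_X_ne hn _ _ h0, Eaut_apply, Ehom_X_ne hn _ _ _ h1]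

/-- non-commuting case -/
lemma SE_ncomm (hn : 2 ≤ n) (u : ℂˣ) (N : ℕ) (hu : (u : ℂ) ^ N ≠ 1) :
    Saut hn u * Eaut hn 1 N ≠ Eaut hn 1 N * Saut hn u := by
  intro h
  have h1 := DFunLike.congr_fun h (X (⟨1, by omega⟩ : Fin n))
  rw [AlgEquiv.mul_apply, AlgEquiv.mul_apply, SE_key, ES_key] at h1
  have h2 := congrArg (coeff (Finsupp.single (⟨0, by omega⟩ : Fin n) N)) h1
  classical
  rw [coeff_add, coeff_add, coeff_C_mul, coeff_C_mul, coeff_X_pow, if_pos rfl] at h2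
  have h3 : coeff (Finsupp.single (⟨0, by omega⟩ : Fin n) N)
      (X (⟨1, by omega⟩ : Fin n) : MvPolynomial (Fin n) ℂ) = 0 := by
    classical
    rw [coeff_X']
    have : ¬ (Finsupp.single (⟨1, by omega⟩ : Fin n) 1 = Finsupp.single (⟨0, by omega⟩ : Fin n) N) := by
      intro hc
      have := DFunLike.congr_fun hc (⟨1, by omega⟩ : Fin n)
      simp [Finsupp.single_apply, Ne.symm (zo hn)] at this
    simp [this]
  rw [h3] at h2
  apply hu
  simpa using h2

end AutCnAux

open AutCnAux Module

/-- STATEMENT 9: for `n ≥ 2`, the group `Aut(ℂⁿ)` is not linear: there is no injective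
group homomorphism `Aut(ℂⁿ) → GL_m(ℂ)`. -/
theorem autCn_not_linear (n m : ℕ) (hn : 2 ≤ n) (ρ : PolyAutN n →* GL (Fin m) ℂ) :
    ¬ Function.Injective ρ := by
  intro hinj
  set K := m * m with hK
  -- primitive roots of unity
  have hprim : ∀ k : ℕ, IsPrimitiveRoot (Complex.exp (2 * Real.pi * Complex.I / (2 ^ (k+1) : ℕ))) (2 ^ (k+1)) :=
    fun k => Complex.isPrimitiveRoot_exp _ (by positivity)
  let w : ℕ → ℂˣ := fun k => Units.mk0 _ (Complex.exp_ne_zero (2 * Real.pi * Complex.I / (2 ^ (k+1) : ℕ)))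
  let a : ℕ → PolyAutN n := fun j => Eaut hn 1 (2 ^ j)
  let b : ℕ → PolyAutN n := fun k => Saut hn (w k)
  have hcomm : ∀ k j : ℕ, k < j → b k * a j = a j * b k := by
    intro k j hkj
    refine SE_comm hn (w k) 1 (2 ^ j) ?_
    have : (2 : ℕ) ^ (k+1) ∣ 2 ^ j := pow_dvd_pow 2 (by omega)
    exact ((hprim k).pow_eq_one_iff_dvd _).2 this
  have hnc : ∀ k : ℕ, b k * a k ≠ a k * b k := by
    intro k
    refine SE_ncomm hn (w k) (2 ^ k) ?_
    intro h1
    have hdvd := ((hprim k).pow_eq_one_iff_dvd _).1 h1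
    rw [Nat.pow_dvd_pow_iff_le_right (by norm_num)] at hdvd
    omega
  -- centralizer subspaces
  let A : ℕ → Matrix (Fin m) (Fin m) ℂ := fun j => (ρ (a j) : Matrix (Fin m) (Fin m) ℂ)
  let V : ℕ → Submodule ℂ (Matrix (Fin m) (Fin m) ℂ) := fun k =>
    { carrier := {M | ∀ j, k ≤ j → j ≤ K → M * A j = A j * M}
      add_mem' := by
        intro M₁ M₂ h₁ h₂ j hj1 hj2
        rw [add_mul, mul_add, h₁ j hj1 hj2, h₂ j hj1 hj2]
      zero_mem' := by intro j _ _; rw [zero_mul, mul_zero]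
      smul_mem' := by
        intro c M hM j hj1 hj2
        rw [smul_mul_assoc, mul_smul_comm, hM j hj1 hj2] }
  have hmono : ∀ k, V k ≤ V (k+1) := by
    intro k M hM j hj1 hj2
    exact hM j (by omega) hj2
  have hBmem : ∀ k, ((ρ (b k) : Matrix (Fin m) (Fin m) ℂ)) ∈ V (k+1) := by
    intro k j hj1 hj2
    have h1 : ρ (b k) * ρ (a j) = ρ (a j) * ρ (b k) := by
      rw [← map_mul, ← map_mul, hcomm k j (by omega)]
    have := congrArg Units.val h1
    simpa [Units.val_mul] using this
  have hBnot : ∀ k, k ≤ K → ((ρ (b k) : Matrix (Fin m) (Fin m) ℂ)) ∉ V k := by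
    intro k hk hmem
    have h1 := hmem k le_rfl hk
    have h2 : ρ (b k) * ρ (a k) = ρ (a k) * ρ (b k) := by
      apply Units.ext
      simpa [Units.val_mul] using h1
    rw [← map_mul, ← map_mul] at h2
    exact hnc k (hinj h2)
  have hlt : ∀ k, k ≤ K → V k < V (k+1) := by
    intro k hk
    refine lt_of_le_of_ne (hmono k) (fun he => hBnot k hk ?_)
    rw [he]
    exact hBmem k
  have hrk : ∀ k, k ≤ K + 1 → k ≤ finrank ℂ (V k) := by
    intro k
    induction k with
    | zero => intro _; exact Nat.zero_le _
    | succ k ih =>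
      intro hk
      have h1 := ih (by omega)
      have h2 := Submodule.finrank_lt_finrank_of_lt (hlt k (by omega))
      omega
  have h1 := hrk (K + 1) le_rfl
  have h2 := Submodule.finrank_le (V (K + 1))
  rw [show finrank ℂ (Matrix (Fin m) (Fin m) ℂ) = m * m by
    simp [Module.finrank_matrix]] at h2
  omega

end
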